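/- For n ≥ 2 and τ_n ∈ 𝕋, the para-orthogonal rational function Q_n(z, τ_n) = φ_n(z) + τ_n·φ_n^*(z) is orthogonal to the (n−1)-dimensional subspace L_{n−1}(γ_n) = {f ∈ L_{n−1} : f(γ_n) = 0} = {ϖ_n^*(z)·p(z)/π_{n−1}(z) : p a complex polynomial of degree ≤ n−2}, where ϖ_n^*(z) = z − γ_n if γ_n ≠ ∞ and ϖ_n^*(z) = −1 if γ_n = ∞; that is, ⟨Q_n(·, τ_n), f⟩ = 0 for every f ∈ L_{n−1}(γ_n). -/

import Mathlib

noncomputable section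
open MeasureTheory
open scoped Classical

namespace ORF

/-- complex conjugation -/
def conj' (z : ℂ) : ℂ := (starRingEnd ℂ) z

/-- membership in the unit circle 𝕋 -/
def onT (z : ℂ) : Prop := ‖z‖ = 1

/-- `z` is a (strictly) positive real number -/
def posR (z : ℂ) : Prop := 0 < z.re ∧ z.im = 0

/-- σ_j = conj(α_j)/|α_j| (σ_j = 1 if α_j = 0, i.e. if β_j = ∞) -/
def sig (α : ℕ → ℂ) (j : ℕ) : ℂ :=
  if α j = 0 then 1 else conj' (α j) / (‖α j‖ : ℂ)

/-- ς_n = ∏_{j=1}^n σ_j -/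
def sigProd (α : ℕ → ℂ) (n : ℕ) : ℂ := ∏ j ∈ Finset.Icc 1 n, sig α j

/-- ϖ_j^α(z) = 1 − conj(α_j)·z, as a polynomial in z -/
def wA (α : ℕ → ℂ) (j : ℕ) : Polynomial ℂ :=
  1 - Polynomial.C (conj' (α j)) * Polynomial.X

/-- ϖ_j^β(z) = 1 − conj(β_j)·z = 1 − z/α_j, and −z when β_j = ∞ (α_j = 0) -/
def wB (α : ℕ → ℂ) (j : ℕ) : Polynomial ℂ :=
  if α j = 0 then -Polynomial.X else 1 - Polynomial.C (α j)⁻¹ * Polynomial.X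

/-- ϖ_j = ϖ_j^γ (γ_j = α_j when `c j`, γ_j = β_j otherwise) -/
def wG (α : ℕ → ℂ) (c : ℕ → Bool) (j : ℕ) : Polynomial ℂ :=
  if c j then wA α j else wB α j

/-- π_n^α -/
def piA (α : ℕ → ℂ) (n : ℕ) : Polynomial ℂ := ∏ j ∈ Finset.Icc 1 n, wA α j
/-- π_n^β -/
def piB (α : ℕ → ℂ) (n : ℕ) : Polynomial ℂ := ∏ j ∈ Finset.Icc 1 n, wB α j
/-- π_n = π_n^γ -/
def piG (α : ℕ → ℂ) (c : ℕ → Bool) (n : ℕ) : Polynomial ℂ := ∏ j ∈ Finset.Icc 1 n, wG α c j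

/-- 𝕒_n = {1 ≤ j ≤ n : γ_j = α_j} -/
def aSet (c : ℕ → Bool) (n : ℕ) : Finset ℕ := (Finset.Icc 1 n).filter (fun j => c j = true)
/-- 𝕓_n = {1 ≤ j ≤ n : γ_j = β_j} -/
def bSet (c : ℕ → Bool) (n : ℕ) : Finset ℕ := (Finset.Icc 1 n).filter (fun j => c j = false)

/-- Blaschke factor ζ_j^α -/
def zetaA (α : ℕ → ℂ) (j : ℕ) (z : ℂ) : ℂ :=
  if α j = 0 then z else sig α j * (z - α j) / (1 - conj' (α j) * z)

/-- Blaschke factor ζ_j^β (β_j = 1/conj(α_j); ζ_j^β(z) = 1/z when β_j = ∞) -/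
def zetaB (α : ℕ → ℂ) (j : ℕ) (z : ℂ) : ℂ :=
  if α j = 0 then z⁻¹ else sig α j * (z - (conj' (α j))⁻¹) / (1 - z / α j)

/-- ζ_j = ζ_j^γ -/
def zetaG (α : ℕ → ℂ) (c : ℕ → Bool) (j : ℕ) (z : ℂ) : ℂ :=
  if c j then zetaA α j z else zetaB α j z

/-- B_n^α -/
def BA (α : ℕ → ℂ) (n : ℕ) (z : ℂ) : ℂ := ∏ j ∈ Finset.Icc 1 n, zetaA α j z
/-- B_n^β -/
def BB (α : ℕ → ℂ) (n : ℕ) (z : ℂ) : ℂ := ∏ j ∈ Finset.Icc 1 n, zetaB α j z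
/-- B̌_n^α = ∏_{j ∈ 𝕒_n} ζ_j -/
def BcA (α : ℕ → ℂ) (c : ℕ → Bool) (n : ℕ) (z : ℂ) : ℂ := ∏ j ∈ aSet c n, zetaG α c j z
/-- B̌_n^β = ∏_{j ∈ 𝕓_n} ζ_j -/
def BcB (α : ℕ → ℂ) (c : ℕ → Bool) (n : ℕ) (z : ℂ) : ℂ := ∏ j ∈ bSet c n, zetaG α c j z

/-- ζ̌_n^α (= ζ_n if γ_n = α_n, = 1 otherwise) -/
def zcA (α : ℕ → ℂ) (c : ℕ → Bool) (n : ℕ) (z : ℂ) : ℂ :=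
  if c n then zetaG α c n z else 1
/-- ζ̌_n^β (= ζ_n if γ_n = β_n, = 1 otherwise) -/
def zcB (α : ℕ → ℂ) (c : ℕ → Bool) (n : ℕ) (z : ℂ) : ℂ :=
  if c n then 1 else zetaG α c n z

/-- The space L_n^ν = {p/π_n^ν : deg p ≤ n}; a function `f` belongs to it if it agrees
with such a rational function on the unit circle (where all these objects live). -/
def Lsp (pip : ℕ → Polynomial ℂ) (n : ℕ) : Set (ℂ → ℂ) :=
  {f | ∃ p : Polynomial ℂ, p.natDegree ≤ n ∧ ∀ z, onT z → f z = p.eval z / (pip n).eval z}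

/-- L_{n*}^ν = {f_* : f ∈ L_n^ν} (again as functions on the unit circle, where
f_*(z) = conj(f(1/conj z)) = conj(f(z))) -/
def LstarSp (pip : ℕ → Polynomial ℂ) (n : ℕ) : Set (ℂ → ℂ) :=
  {f | ∃ p : Polynomial ℂ, p.natDegree ≤ n ∧ ∀ z, onT z → f z = conj' (p.eval z / (pip n).eval z)}

/-- R_n^ν = L_n^ν · L_{n*}^ν -/
def Rset (pip : ℕ → Polynomial ℂ) (n : ℕ) : Set (ℂ → ℂ) :=
  {h | ∃ g ∈ Lsp pip n, ∃ k ∈ LstarSp pip n, ∀ z, onT z → h z = g z * k z}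

/-- the substar conjugate f_*(z) = conj(f(1/conj z)) -/
def substar (f : ℂ → ℂ) : ℂ → ℂ := fun z => conj' (f ((conj' z)⁻¹))

/-- superstar conjugate q^*(z) = z^n conj(q(1/conj z)) of a polynomial of degree ≤ n -/
def pstar (n : ℕ) (q : Polynomial ℂ) : Polynomial ℂ :=
  ∑ k ∈ Finset.range (n + 1), Polynomial.C (conj' (q.coeff k)) * Polynomial.X ^ (n - k)

/-- the inner product ⟨f,g⟩ = ∫ conj(f) g dμ -/
def inn (μ : Measure ℂ) (f g : ℂ → ℂ) : ℂ := ∫ z, conj' (f z) * g z ∂μ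

/-- the reciprocal ORF φ_n^{ν*} = B_n^ν (φ_n^ν)_* (resp. φ_n^* = B̌_n^α B̌_n^β (φ_n)_*),
written out as the rational function ς_n p_n^{ν*}/π_n^ν -/
def starF (α : ℕ → ℂ) (pip : ℕ → Polynomial ℂ) (p : ℕ → Polynomial ℂ) (n : ℕ) (z : ℂ) : ℂ :=
  sigProd α n * (pstar n (p n)).eval z / (pip n).eval z

/-- `μ` is a probability measure on the unit circle 𝕋, positive a.e. on 𝕋 -/
structure CircleMeasure (μ : Measure ℂ) : Prop where
  prob : IsProbabilityMeasure μ
  circ : μ {z | ¬ onT z} = 0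
  pos : ∀ U : Set ℂ, IsOpen U → (U ∩ {z | onT z}).Nonempty → 0 < μ U

/-- `φ` (with numerators `p`) is the sequence of orthonormal rational functions for the
nested spaces `Lsp pip`: φ_0 = 1, φ_n = p_n/π_n ∈ L_n \ L_{n-1}, φ_n ⊥ L_{n-1}, ‖φ_n‖ = 1. -/
structure IsORF (μ : Measure ℂ) (pip : ℕ → Polynomial ℂ) (φ : ℕ → ℂ → ℂ)
    (p : ℕ → Polynomial ℂ) : Prop where
  rep : ∀ n z, φ n z = (p n).eval z / (pip n).eval z
  deg : ∀ n, (p n).natDegree ≤ n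
  p0 : p 0 = 1
  notmem : ∀ n, 1 ≤ n → φ n ∉ Lsp pip (n - 1)
  orth : ∀ n, 1 ≤ n → ∀ f ∈ Lsp pip (n - 1), inn μ (φ n) f = 0
  norm : ∀ n, inn μ (φ n) (φ n) = 1

/-- normalization φ_n^{α*}(α_n) > 0 -/
def normA (α : ℕ → ℂ) (p : ℕ → Polynomial ℂ) (n : ℕ) : Prop :=
  posR (sigProd α n * (pstar n (p n)).eval (α n) / (piA α n).eval (α n))

/-- normalization φ_n^{β*}(β_n) > 0 (when β_n = ∞ the value is the limit,
i.e. the ratio of the coefficients of z^n) -/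
def normB (α : ℕ → ℂ) (p : ℕ → Polynomial ℂ) (n : ℕ) : Prop :=
  if α n = 0 then posR (sigProd α n * (pstar n (p n)).coeff n / (piB α n).coeff n)
  else posR (sigProd α n * (pstar n (p n)).eval ((conj' (α n))⁻¹) /
    (piB α n).eval ((conj' (α n))⁻¹))

/-- π̌_n^α = ∏_{j∈𝕒_n} ϖ_j -/
def pidA (α : ℕ → ℂ) (c : ℕ → Bool) (n : ℕ) : Polynomial ℂ := ∏ j ∈ aSet c n, wA α j
/-- π̌_n^β = ∏_{j∈𝕓_n} ϖ_j -/
def pidB (α : ℕ → ℂ) (c : ℕ → Bool) (n : ℕ) : Polynomial ℂ := ∏ j ∈ bSet c n, wB α j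
/-- ∏_{j∈𝕓_n}(z − β_j), a factor being −1 when β_j = ∞ -/
def dB (α : ℕ → ℂ) (c : ℕ → Bool) (n : ℕ) : Polynomial ℂ :=
  ∏ j ∈ bSet c n,
    (if α j = 0 then (-1 : Polynomial ℂ) else Polynomial.X - Polynomial.C ((conj' (α j))⁻¹))
/-- ∏_{j∈𝕒_n}(z − α_j) -/
def dA (α : ℕ → ℂ) (c : ℕ → Bool) (n : ℕ) : Polynomial ℂ :=
  ∏ j ∈ aSet c n, (Polynomial.X - Polynomial.C (α j))

/-- ς̌_n^α = ∏_{j∈𝕒_n} σ_j -/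
def sigcA (α : ℕ → ℂ) (c : ℕ → Bool) (n : ℕ) : ℂ := ∏ j ∈ aSet c n, sig α j
/-- ς̌_n^β = ∏_{j∈𝕓_n} σ_j -/
def sigcB (α : ℕ → ℂ) (c : ℕ → Bool) (n : ℕ) : ℂ := ∏ j ∈ bSet c n, sig α j

/-- normalization for the γ-sequence: (φ_n^*/B̌_n^β)(α_n) > 0 when γ_n = α_n and
(φ_n^*/B̌_n^α)(β_n) > 0 when γ_n = β_n, written via the identities
φ_n^*/B̌_n^β = ς̌_n^α p_n^*/(π̌_n^α ∏_{j∈𝕓_n}(z−β_j)) and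
φ_n^*/B̌_n^α = ς̌_n^β p_n^*/(π̌_n^β ∏_{j∈𝕒_n}(z−α_j)) (the value at β_n = ∞ being the
limit, i.e. the ratio of the coefficients of z^n). -/
def normG (α : ℕ → ℂ) (c : ℕ → Bool) (p : ℕ → Polynomial ℂ) (n : ℕ) : Prop :=
  if c n then
    posR (sigcA α c n * (pstar n (p n)).eval (α n) /
      ((pidA α c n).eval (α n) * (dB α c n).eval (α n)))
  else if α n = 0 then
    posR (sigcB α c n * (pstar n (p n)).coeff n / ((pidB α c n) * dA α c n).coeff n)
  else
    posR (sigcB α c n * (pstar n (p n)).eval ((conj' (α n))⁻¹) /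
      ((pidB α c n) * dA α c n).eval ((conj' (α n))⁻¹))

/-- the reproducing kernel k_n(z,w) = Σ_{k=0}^n φ_k(z) conj(φ_k(w)) -/
def ker (φ : ℕ → ℂ → ℂ) (n : ℕ) (z w : ℂ) : ℂ :=
  ∑ k ∈ Finset.range (n + 1), φ k z * conj' (φ k w)

/-- evaluation of a polynomial of degree ≤ m at γ_j (its coefficient of z^m when γ_j = ∞) -/
def gEval (α : ℕ → ℂ) (c : ℕ → Bool) (m j : ℕ) (q : Polynomial ℂ) : ℂ :=
  if c j then q.eval (α j)
  else if α j = 0 then q.coeff m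
  else q.eval ((conj' (α j))⁻¹)

/-- evaluation of a polynomial of degree ≤ m at β_j (its coefficient of z^m when β_j = ∞) -/
def bEval (α : ℕ → ℂ) (m j : ℕ) (q : Polynomial ℂ) : ℂ :=
  if α j = 0 then q.coeff m else q.eval ((conj' (α j))⁻¹)

/-- η_n^α (the unimodular constant in the Szegő parameter λ_n^α) -/
def etaA (α : ℕ → ℂ) (p : ℕ → Polynomial ℂ) (n : ℕ) : ℂ :=
  conj' (sigProd α (n - 2)) * conj' ((pstar (n - 1) (p (n - 1))).eval (α (n - 1))) /
    ((pstar (n - 1) (p (n - 1))).eval (α (n - 1)))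

/-- the Szegő parameter λ_n^α -/
def lamA (α : ℕ → ℂ) (p : ℕ → Polynomial ℂ) (n : ℕ) : ℂ :=
  etaA α p n * (p n).eval (α (n - 1)) / conj' ((pstar n (p n)).eval (α (n - 1)))

/-- η_n^β -/
def etaB (α : ℕ → ℂ) (p : ℕ → Polynomial ℂ) (n : ℕ) : ℂ :=
  conj' (sigProd α (n - 2)) * conj' (bEval α (n - 1) (n - 1) (pstar (n - 1) (p (n - 1)))) /
    (bEval α (n - 1) (n - 1) (pstar (n - 1) (p (n - 1))))

/-- the Szegő parameter λ_n^β -/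
def lamB (α : ℕ → ℂ) (p : ℕ → Polynomial ℂ) (n : ℕ) : ℂ :=
  etaB α p n * bEval α n (n - 1) (p n) / conj' (bEval α n (n - 1) (pstar n (p n)))

/-- η_n = η_n^γ -/
def etaG (α : ℕ → ℂ) (c : ℕ → Bool) (p : ℕ → Polynomial ℂ) (n : ℕ) : ℂ :=
  conj' (sigProd α (n - 2)) * conj' (gEval α c (n - 1) (n - 1) (pstar (n - 1) (p (n - 1)))) /
    (gEval α c (n - 1) (n - 1) (pstar (n - 1) (p (n - 1))))

/-- the Szegő parameter λ_n = λ_n^γ -/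
def lamG (α : ℕ → ℂ) (c : ℕ → Bool) (p : ℕ → Polynomial ℂ) (n : ℕ) : ℂ :=
  etaG α c p n * gEval α c n (n - 1) (p n) / conj' (gEval α c n (n - 1) (pstar n (p n)))

/-- functions of the second kind: ψ(z) = ∫ E(t,z) φ(t) − D(t,z) φ(z) dμ(t) -/
def psi (μ : Measure ℂ) (φ : ℂ → ℂ) (z : ℂ) : ℂ :=
  ∫ t, (2 * t / (t - z)) * φ t - ((t + z) / (t - z)) * φ z ∂μ

/-- ∏_{j=k+1}^n ϖ_j -/
def tailProd (α : ℕ → ℂ) (c : ℕ → Bool) (n k : ℕ) : Polynomial ℂ :=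
  ∏ j ∈ Finset.Icc (k + 1) n, wG α c j

/-- the numerator C_n(z,w) of the kernel k_n = C_n/(π_n(z) conj(π_n(w))), as a polynomial
in w after conjugation: C_n(z,w) = conj((CnPoly n z).eval w) -/
def CnPoly (α : ℕ → ℂ) (c : ℕ → Bool) (p : ℕ → Polynomial ℂ) (n : ℕ) (z : ℂ) : Polynomial ℂ :=
  ∑ k ∈ Finset.range (n + 1),
    Polynomial.C (conj' ((p k).eval z * (tailProd α c n k).eval z)) * ((p k) * tailProd α c n k)

/-- z ↦ C_n(z,∞) (the coefficient of w^n of w ↦ C_n(z,w)), as a polynomial in z -/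
def CnInf (α : ℕ → ℂ) (c : ℕ → Bool) (p : ℕ → Polynomial ℂ) (n : ℕ) : Polynomial ℂ :=
  ∑ k ∈ Finset.range (n + 1),
    ((p k) * tailProd α c n k) * Polynomial.C (conj' (((p k) * tailProd α c n k).coeff n))

/-- ϖ_n^*(z) = z − γ_n (= −1 when γ_n = ∞) -/
def wstarG (α : ℕ → ℂ) (c : ℕ → Bool) (n : ℕ) : Polynomial ℂ :=
  if c n then Polynomial.X - Polynomial.C (α n)
  else if α n = 0 then -1
  else Polynomial.X - Polynomial.C ((conj' (α n))⁻¹)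

end ORF

open ORF MeasureTheory

-- ===== auxiliary lemmas =====
namespace ORFAux
open Polynomial

lemma onT_ne (z : ℂ) (hz : onT z) : z ≠ 0 := by
  intro h; simp [onT, h] at hz

lemma onT_conj (z : ℂ) (hz : onT z) : conj' z = z⁻¹ := by
  rw [conj', Complex.inv_def, Complex.normSq_eq_norm_sq, hz]; simp

lemma abs_lt_ne (a z : ℂ) (ha : ‖a‖ < 1) (hz : onT z) : z - a ≠ 0 := by
  intro h
  rw [sub_eq_zero] at h
  have : ‖a‖ = 1 := by rw [← h]; exact hz
  rw [this] at ha
  exact lt_irrefl _ ha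

lemma wG_ne (α : ℕ → ℂ) (hα : ∀ j, ‖α j‖ < 1) (c : ℕ → Bool) (j : ℕ)
    (z : ℂ) (hz : onT z) : (wG α c j).eval z ≠ 0 := by
  have hz1 : ‖z‖ = 1 := hz
  by_cases hc : c j
  · simp only [wG, if_pos hc, wA]
    simp only [Polynomial.eval_sub, Polynomial.eval_one, Polynomial.eval_mul,
      Polynomial.eval_C, Polynomial.eval_X]
    intro he
    rw [sub_eq_zero] at he
    have : ‖(1:ℂ)‖ = ‖conj' (α j) * z‖ := by rw [← he]
    rw [norm_mul, hz1, mul_one, norm_one] at this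
    simp [conj'] at this
    have h2 := hα j
    rw [← this] at h2
    exact lt_irrefl _ h2
  · simp only [wG, if_neg hc, wB]
    by_cases h0 : α j = 0
    · simp only [if_pos h0, Polynomial.eval_neg, Polynomial.eval_X, neg_ne_zero]
      exact onT_ne z hz
    · simp only [if_neg h0, Polynomial.eval_sub, Polynomial.eval_one, Polynomial.eval_mul,
        Polynomial.eval_C, Polynomial.eval_X]
      intro he
      rw [sub_eq_zero] at he
      have : ‖(1:ℂ)‖ = ‖(α j)⁻¹ * z‖ := by rw [← he]
      rw [norm_mul, norm_inv, hz1, mul_one, norm_one] at this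
      have h1 : ‖α j‖ = 1 := by
        field_simp at this
        simpa using this
      have h2 := hα j
      rw [h1] at h2
      exact lt_irrefl _ h2

lemma wstar_ne (α : ℕ → ℂ) (hα : ∀ j, ‖α j‖ < 1) (c : ℕ → Bool) (j : ℕ)
    (z : ℂ) (hz : onT z) : (wstarG α c j).eval z ≠ 0 := by
  have hz1 : ‖z‖ = 1 := hz
  by_cases hc : c j
  · simp only [wstarG, if_pos hc, Polynomial.eval_sub, Polynomial.eval_X, Polynomial.eval_C]
    exact abs_lt_ne _ _ (hα j) hz
  · by_cases h0 : α j = 0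
    · simp only [wstarG, if_neg hc, if_pos h0]
      norm_num
    · simp only [wstarG, if_neg hc, if_neg h0, Polynomial.eval_sub, Polynomial.eval_X,
        Polynomial.eval_C]
      intro he
      rw [sub_eq_zero] at he
      have : ‖z‖ = (‖α j‖)⁻¹ := by
        rw [he, norm_inv]; simp [conj']
      rw [hz1] at this
      have h1 : ‖α j‖ = 1 := inv_eq_one.mp this.symm
      have h2 := hα j
      rw [h1] at h2
      exact lt_irrefl _ h2

lemma conj_wG (α : ℕ → ℂ) (c : ℕ → Bool) (j : ℕ) (z : ℂ) (hz : onT z) :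
    conj' ((wG α c j).eval z) = z⁻¹ * (wstarG α c j).eval z := by
  have hz0 := onT_ne z hz
  have hcz : (starRingEnd ℂ) z = z⁻¹ := onT_conj z hz
  by_cases hc : c j
  · simp only [wG, wstarG, if_pos hc, wA, conj', Polynomial.eval_sub, Polynomial.eval_one,
      Polynomial.eval_mul, Polynomial.eval_C, Polynomial.eval_X, map_sub, map_mul, map_one,
      Complex.conj_conj, hcz]
    field_simp
  · by_cases h0 : α j = 0
    · simp only [wG, wstarG, if_neg hc, wB, if_pos h0, conj', Polynomial.eval_neg,
        Polynomial.eval_X, map_neg, hcz, Polynomial.eval_one]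
      simp
    · simp only [wG, wstarG, if_neg hc, wB, if_neg h0, conj', Polynomial.eval_sub,
        Polynomial.eval_one, Polynomial.eval_mul, Polynomial.eval_C, Polynomial.eval_X,
        map_sub, map_mul, map_one, map_inv₀, hcz]
      have hcα : (starRingEnd ℂ) (α j) ≠ 0 := by simpa using h0
      field_simp

lemma conj_piG (α : ℕ → ℂ) (c : ℕ → Bool) (m : ℕ) (z : ℂ) (hz : onT z) :
    conj' ((piG α c m).eval z) =
      (z⁻¹) ^ m * ∏ j ∈ Finset.Icc 1 m, (wstarG α c j).eval z := by
  rw [piG, Polynomial.eval_prod, conj', map_prod]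
  have : ∀ j ∈ Finset.Icc 1 m, (starRingEnd ℂ) ((wG α c j).eval z)
      = z⁻¹ * (wstarG α c j).eval z := fun j _ => conj_wG α c j z hz
  rw [Finset.prod_congr rfl this, Finset.prod_mul_distrib, Finset.prod_const,
    Nat.card_Icc]
  simp

lemma pstar_eval (m : ℕ) (q : Polynomial ℂ) (hq : q.natDegree ≤ m) (z : ℂ) (hz : onT z) :
    (pstar m q).eval z = z ^ m * conj' (q.eval z) := by
  have hz0 := onT_ne z hz
  have hcz : (starRingEnd ℂ) z = z⁻¹ := onT_conj z hz
  rw [pstar, Polynomial.eval_finset_sum]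
  have hqe : q.eval z = ∑ k ∈ Finset.range (m + 1), q.coeff k * z ^ k :=
    Polynomial.eval_eq_sum_range' (by omega) z
  rw [conj', hqe, map_sum, Finset.mul_sum]
  refine Finset.sum_congr rfl fun k hk => ?_
  rw [Finset.mem_range] at hk
  rw [map_mul, map_pow, hcz]
  simp only [Polynomial.eval_mul, Polynomial.eval_C, Polynomial.eval_pow, Polynomial.eval_X]
  rw [pow_sub₀ _ hz0 (by omega : k ≤ m)]
  rw [conj', inv_pow]
  field_simp

lemma prod_Icc_split (n : ℕ) (hn : 1 ≤ n) (g : ℕ → ℂ) :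
    ∏ j ∈ Finset.Icc 1 n, g j = (∏ j ∈ Finset.Icc 1 (n-1), g j) * g n := by
  have h : n - 1 + 1 = n := by omega
  rw [← h, Finset.prod_Icc_succ_top (by omega), h]

lemma piG_split (α : ℕ → ℂ) (c : ℕ → Bool) (n : ℕ) (hn : 1 ≤ n) (z : ℂ) :
    (piG α c n).eval z = (piG α c (n-1)).eval z * (wG α c n).eval z := by
  rw [piG, piG, Polynomial.eval_prod, Polynomial.eval_prod,
    prod_Icc_split n hn (fun j => (wG α c j).eval z)]

lemma ae_onT (μ : Measure ℂ) (hμ : CircleMeasure μ) : ∀ᵐ z ∂μ, onT z := hμ.circ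

lemma integrable_of_onT (μ : Measure ℂ) (hμ : CircleMeasure μ) (F G : ℂ → ℂ)
    (hGm : Measurable G) (hGc : ContinuousOn G (Metric.sphere (0:ℂ) 1))
    (hFG : ∀ z, onT z → F z = G z) : Integrable F μ := by
  haveI := hμ.prob
  obtain ⟨C, hC⟩ := (isCompact_sphere (0:ℂ) 1).exists_bound_of_continuousOn hGc
  have hmem : ∀ z : ℂ, onT z → z ∈ Metric.sphere (0:ℂ) 1 := by
    intro z hz
    rw [mem_sphere_zero_iff_norm]
    exact hz
  have hae := ae_onT μ hμ
  have hGint : Integrable G μ := by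
    refine (integrable_const C).mono' hGm.aestronglyMeasurable ?_
    filter_upwards [hae] with z hz
    exact hC z (hmem z hz)
  exact hGint.congr (by filter_upwards [hae] with z hz; exact (hFG z hz).symm)

lemma piG_eval_ne (α : ℕ → ℂ) (hα : ∀ j, ‖α j‖ < 1) (c : ℕ → Bool) (m : ℕ)
    (z : ℂ) (hz : onT z) : (piG α c m).eval z ≠ 0 := by
  rw [piG, Polynomial.eval_prod]
  exact Finset.prod_ne_zero_iff.mpr fun j _ => wG_ne α hα c j z hz

lemma key (α : ℕ → ℂ) (hα : ∀ j, ‖α j‖ < 1) (c : ℕ → Bool)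
    (pn q : Polynomial ℂ) (m : ℕ) (hdp : pn.natDegree ≤ m+2) (hdq : q.natDegree ≤ m)
    (ς : ℂ) (z : ℂ) (hz : onT z) :
    conj' (ς * (pstar (m+2) pn).eval z / (piG α c (m+2)).eval z) *
      ((wstarG α c (m+2)).eval z * q.eval z / (piG α c (m+1)).eval z)
    = conj' ς * ((pn.eval z) / (piG α c (m+2)).eval z) *
      conj' (((wstarG α c (m+2)) * pstar m q).eval z / (piG α c (m+1)).eval z) := by
  have hz0 := onT_ne z hz
  have hcz : (starRingEnd ℂ) z = z⁻¹ := onT_conj z hz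
  have hv : (wG α c (m+2)).eval z ≠ 0 := wG_ne α hα c (m+2) z hz
  have hw : (wstarG α c (m+2)).eval z ≠ 0 := wstar_ne α hα c (m+2) z hz
  have hP0 : (piG α c (m+1)).eval z ≠ 0 := piG_eval_ne α hα c (m+1) z hz
  have hW0 : (∏ j ∈ Finset.Icc 1 (m+1), (wstarG α c j).eval z) ≠ 0 :=
    Finset.prod_ne_zero_iff.mpr fun j _ => wstar_ne α hα c j z hz
  have hP : conj' ((piG α c (m+1)).eval z)
      = (z⁻¹)^(m+1) * ∏ j ∈ Finset.Icc 1 (m+1), (wstarG α c j).eval z :=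
    conj_piG α c (m+1) z hz
  have hPn : (piG α c (m+2)).eval z = (piG α c (m+1)).eval z * (wG α c (m+2)).eval z := by
    simpa using piG_split α c (m+2) (by omega) z
  have hps : (pstar (m+2) pn).eval z = z^(m+2) * conj' (pn.eval z) :=
    pstar_eval (m+2) pn hdp z hz
  have hqs : (pstar m q).eval z = z^m * conj' (q.eval z) :=
    pstar_eval m q hdq z hz
  have hcw : conj' ((wstarG α c (m+2)).eval z) = z⁻¹ * (wG α c (m+2)).eval z := by
    have h := conj_wG α c (m+2) z hz
    have h2 := congrArg (starRingEnd ℂ) h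
    simp only [conj', Complex.conj_conj, map_mul, map_inv₀, hcz, inv_inv] at h2 ⊢
    rw [h2]
    field_simp
  have hcv : conj' ((wG α c (m+2)).eval z) = z⁻¹ * (wstarG α c (m+2)).eval z :=
    conj_wG α c (m+2) z hz
  rw [hPn, hps, Polynomial.eval_mul, hqs]
  simp only [conj', map_div₀, map_mul, map_pow, Complex.conj_conj, hcz, map_inv₀]
    at hP hcw hcv ⊢
  rw [hP, hcw, hcv]
  simp only [inv_pow]
  field_simp [hz0, hv, hw, hP0, hW0]
  ring

lemma wstar_deg (α : ℕ → ℂ) (c : ℕ → Bool) (j : ℕ) : (wstarG α c j).natDegree ≤ 1 := by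
  by_cases hc : c j
  · simp [wstarG, hc, Polynomial.natDegree_X_sub_C]
  · by_cases h0 : α j = 0
    · simp [wstarG, hc, h0]
    · simp [wstarG, hc, h0, Polynomial.natDegree_X_sub_C]

lemma pstar_deg (m : ℕ) (q : Polynomial ℂ) : (pstar m q).natDegree ≤ m := by
  refine Polynomial.natDegree_sum_le_of_forall_le _ _ fun k hk => ?_
  refine (Polynomial.natDegree_C_mul_le _ _).trans ?_
  simp only [Polynomial.natDegree_X_pow]
  omega

lemma meas_ratio (P D : Polynomial ℂ) : Measurable (fun z => P.eval z / D.eval z) :=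
  P.continuous.measurable.div D.continuous.measurable

lemma mem_sphere_onT (z : ℂ) (hz : z ∈ Metric.sphere (0:ℂ) 1) : onT z := by
  rw [mem_sphere_zero_iff_norm] at hz
  exact hz

lemma contOn_ratio (α : ℕ → ℂ) (hα : ∀ j, ‖α j‖ < 1) (c : ℕ → Bool)
    (P : Polynomial ℂ) (k : ℕ) :
    ContinuousOn (fun z => P.eval z / (piG α c k).eval z) (Metric.sphere (0:ℂ) 1) :=
  P.continuous.continuousOn.div (piG α c k).continuous.continuousOn
    fun z hz => piG_eval_ne α hα c k z (mem_sphere_onT z hz)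

end ORFAux

open ORFAux Polynomial


/-- Theorem `thm2`: for n ≥ 2 and τ_n ∈ 𝕋, the para-orthogonal rational
function Q_n(z,τ_n) = φ_n(z) + τ_n φ_n^*(z) is orthogonal to
L_{n−1}(γ_n) = {ϖ_n^*(z) p(z)/π_{n−1}(z) : deg p ≤ n−2}, where ϖ_n^*(z) = z − γ_n
(= −1 when γ_n = ∞). -/
theorem stmt13 (α : ℕ → ℂ) (hα0 : α 0 = 0) (hα : ∀ j, ‖α j‖ < 1)
    (c : ℕ → Bool) (μ : Measure ℂ) (hμ : CircleMeasure μ)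
    (φ : ℕ → ℂ → ℂ) (p : ℕ → Polynomial ℂ)
    (hφ : IsORF μ (piG α c) φ p) (hnφ : ∀ n, normG α c p n)
    (n : ℕ) (hn : 2 ≤ n) (τ : ℂ) (hτ : ‖τ‖ = 1)
    (f : ℂ → ℂ)
    (hf : ∃ q : Polynomial ℂ, q.natDegree ≤ n - 2 ∧
      ∀ z, onT z → f z = (wstarG α c n).eval z * q.eval z / (piG α c (n - 1)).eval z) :
    inn μ (fun z => φ n z + τ * starF α (piG α c) p n z) f = 0 := by
  obtain ⟨q, hq, hfq⟩ := hf
  obtain ⟨m, rfl⟩ : ∃ m, n = m + 2 := ⟨n - 2, by omega⟩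
  haveI := hμ.prob
  have hq' : q.natDegree ≤ m := hq
  have hfq' : ∀ z, onT z → f z
      = (wstarG α c (m+2)).eval z * q.eval z / (piG α c (m+1)).eval z := hfq
  set g : ℂ → ℂ :=
    fun z => ((wstarG α c (m+2)) * pstar m q).eval z / (piG α c (m+1)).eval z with hg
  -- membership of f and g in L_{n-1}
  have hfL : f ∈ Lsp (piG α c) (m+1) := by
    refine ⟨(wstarG α c (m+2)) * q, ?_, fun z hz => ?_⟩
    · exact (Polynomial.natDegree_mul_le).trans
        (by have := wstar_deg α c (m+2); omega)
    · rw [hfq' z hz, Polynomial.eval_mul]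
  have hgL : g ∈ Lsp (piG α c) (m+1) := by
    refine ⟨(wstarG α c (m+2)) * pstar m q, ?_, fun z hz => rfl⟩
    exact (Polynomial.natDegree_mul_le).trans
      (by have := wstar_deg α c (m+2); have := pstar_deg m q; omega)
  have horthf : inn μ (φ (m+2)) f = 0 := hφ.orth (m+2) (by omega) f hfL
  have horthg : inn μ (φ (m+2)) g = 0 := hφ.orth (m+2) (by omega) g hgL
  -- the a.e. pointwise splitting
  set ς := sigProd α (m+2) with hς
  set H1 : ℂ → ℂ := fun z => conj' (φ (m+2) z) * f z with hH1
  set K : ℂ → ℂ := fun z => conj' (φ (m+2) z) * g z with hK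
  have hae := ae_onT μ hμ
  have hsplit : ∀ᵐ z ∂μ,
      conj' (φ (m+2) z + τ * starF α (piG α c) p (m+2) z) * f z
        = H1 z + conj' (τ * ς) * conj' (K z) := by
    filter_upwards [hae] with z hz
    have hrep := hφ.rep (m+2) z
    have hkey := key α hα c (p (m+2)) q m (hφ.deg (m+2)) hq' ς z hz
    have hsf : starF α (piG α c) p (m+2) z
        = ς * (pstar (m+2) (p (m+2))).eval z / (piG α c (m+2)).eval z := rfl
    have hfz := hfq' z hz
    show conj' (φ (m+2) z + τ * starF α (piG α c) p (m+2) z) * f z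
        = conj' (φ (m+2) z) * f z + conj' (τ * ς) *
          conj' (conj' (φ (m+2) z) *
            (((wstarG α c (m+2)) * pstar m q).eval z / (piG α c (m+1)).eval z))
    rw [hsf, hfz, hrep]
    simp only [conj', map_add, map_mul, map_div₀, Complex.conj_conj] at hkey ⊢
    linear_combination ((starRingEnd ℂ) τ) * hkey
  -- integrability
  have hint1 : Integrable H1 μ := by
    refine integrable_of_onT μ hμ H1
      (fun z => conj' ((p (m+2)).eval z / (piG α c (m+2)).eval z) *
        (((wstarG α c (m+2)) * q).eval z / (piG α c (m+1)).eval z)) ?_ ?_ ?_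
    · exact (Complex.continuous_conj.measurable.comp (meas_ratio _ _)).mul (meas_ratio _ _)
    · exact (((contOn_ratio α hα c _ _).star).mul (contOn_ratio α hα c _ _))
    · intro z hz
      rw [hH1]
      simp only []
      rw [hφ.rep (m+2) z, hfq' z hz, Polynomial.eval_mul]
  have hint2 : Integrable (fun z => conj' (τ * ς) * conj' (K z)) μ := by
    refine integrable_of_onT μ hμ _
      (fun z => conj' (τ * ς) * conj' (conj' ((p (m+2)).eval z / (piG α c (m+2)).eval z) *
        (((wstarG α c (m+2)) * pstar m q).eval z / (piG α c (m+1)).eval z))) ?_ ?_ ?_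
    · exact measurable_const.mul (Complex.continuous_conj.measurable.comp
        ((Complex.continuous_conj.measurable.comp (meas_ratio _ _)).mul (meas_ratio _ _)))
    · exact continuousOn_const.mul
        ((((contOn_ratio α hα c _ _).star).mul (contOn_ratio α hα c _ _)).star)
    · intro z hz
      rw [hK]
      simp only []
      rw [hφ.rep (m+2) z]
  -- conclude
  rw [inn, integral_congr_ae hsplit, integral_add hint1 hint2]
  have e1 : ∫ z, H1 z ∂μ = 0 := horthf
  have e2 : ∫ z, conj' (τ * ς) * conj' (K z) ∂μ = 0 := by
    simp_rw [← smul_eq_mul]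
    rw [integral_smul, smul_eq_mul]
    have : ∫ z, conj' (K z) ∂μ = conj' (∫ z, K z ∂μ) := integral_conj
    rw [this]
    have : ∫ z, K z ∂μ = 0 := horthg
    rw [this]
    simp [conj']
  rw [e1, e2, add_zero]
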